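/- The WMMS fairness notion suffers from the inversion paradox for indivisible goods with additive valuations. Concretely, take 3 agents and 4 items e_1, …, e_4 with additive valuations v_1 = (12, 20, 45, 26), v_2 = (20, 12, 45, 26), v_3 = (10, 9, 11, 11) (listing item values in order), and entitlement vectors b = (0.46, 0.45, 0.09) and b' = (0.44, 0.45, 0.11). Then b' 3-improves b; the set of allocations acceptable under WMMS for b is nonempty and every such allocation gives agent 3 the bundle {e_1} of value 10; the set of allocations acceptable under WMMS for b' is nonempty and every such allocation gives agent 3 the bundle {e_2} of value 9. Hence every allocation acceptable for b gives agent 3 strictly more value than every allocation acceptable for b', even though b' >_3 b. -/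

import Mathlib

namespace Stmt11

/-- A partition of the items into (possibly empty) bundles. -/
def IsPartition {n m : ℕ} (A : Fin n → Finset (Fin m)) : Prop :=
  (∀ i j, i ≠ j → Disjoint (A i) (A j)) ∧ ∀ e, ∃ i, e ∈ A i

/-- Additive value of a bundle. -/
def bval {m : ℕ} (w : Fin m → ℝ) (S : Finset (Fin m)) : ℝ := ∑ e ∈ S, w e

/-- The additive valuations: v₁ = (12,20,45,26), v₂ = (20,12,45,26), v₃ = (10,9,11,11). -/
def v : Fin 3 → Fin 4 → ℝ :=
  ![![12, 20, 45, 26], ![20, 12, 45, 26], ![10, 9, 11, 11]]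

/-- Entitlement vector b = (0.46, 0.45, 0.09). -/
noncomputable def b : Fin 3 → ℝ := ![0.46, 0.45, 0.09]

/-- Entitlement vector b' = (0.44, 0.45, 0.11). -/
noncomputable def b' : Fin 3 → ℝ := ![0.44, 0.45, 0.11]

/-- The weighted maximin share of agent `i` under entitlements `β`:
the maximum over partitions `B` of `min_j (β i / β j) · v_i(B j)`. -/
noncomputable def wmms (β : Fin 3 → ℝ) (i : Fin 3) : ℝ :=
  sSup {t : ℝ | ∃ B : Fin 3 → Finset (Fin 4), IsPartition B ∧
    t = ⨅ j, (β i / β j) * bval (v i) (B j)}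

/-- Acceptable under WMMS: every agent gets at least her WMMS. -/
noncomputable def WmmsAcc (β : Fin 3 → ℝ) (A : Fin 3 → Finset (Fin 4)) : Prop :=
  IsPartition A ∧ ∀ i, wmms β i ≤ bval (v i) (A i)

/-! ### Auxiliary machinery -/

def vz : Fin 3 → Fin 4 → ℤ := ![![12, 20, 45, 26], ![20, 12, 45, 26], ![10, 9, 11, 11]]
def nb : Fin 3 → ℤ := ![46, 45, 9]
def nb' : Fin 3 → ℤ := ![44, 45, 11]
def nW : Fin 3 → ℤ := ![46, 45, 11]
def dW : Fin 3 → ℤ := ![1, 1, 5]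
def nW' : Fin 3 → ℤ := ![2024, 46, 11]
def dW' : Fin 3 → ℤ := ![45, 1, 4]

noncomputable def WbR : Fin 3 → ℝ := ![46, 45, 11/5]
noncomputable def Wb'R : Fin 3 → ℝ := ![2024/45, 46, 11/4]

def bnd (f : Fin 4 → Fin 3) (j : Fin 3) : Finset (Fin 4) :=
  Finset.univ.filter (fun e => f e = j)

def QZ (i : Fin 3) (f : Fin 4 → Fin 3) (j : Fin 3) : ℤ := ∑ e ∈ bnd f j, vz i e

set_option maxRecDepth 100000 in
lemma UBZ : ∀ f : Fin 4 → Fin 3, ∀ i,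
    (∃ j, nb i * QZ i f j * dW i ≤ nW i * nb j) ∧
    (∃ j, nb' i * QZ i f j * dW' i ≤ nW' i * nb' j) := by decide

set_option maxRecDepth 100000 in
lemma UNIQZ : ∀ f : Fin 4 → Fin 3,
    (46 ≤ QZ 0 f 0 → 45 ≤ QZ 1 f 1 → 11 ≤ 5 * QZ 2 f 2 → bnd f 2 = {0} ∧ QZ 2 f 2 = 10) ∧
    (2024 ≤ 45 * QZ 0 f 0 → 46 ≤ QZ 1 f 1 → 11 ≤ 4 * QZ 2 f 2 → bnd f 2 = {1} ∧ QZ 2 f 2 = 9) := by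
  decide

lemma hv : ∀ i e, v i e = ((vz i e : ℤ) : ℝ) := by
  intro i e; fin_cases i <;> fin_cases e <;> norm_num [v, vz]

lemma hbval (i : Fin 3) (f : Fin 4 → Fin 3) (j : Fin 3) :
    bval (v i) (bnd f j) = ((QZ i f j : ℤ) : ℝ) := by
  simp only [bval, QZ, Int.cast_sum, hv]

lemma isPartition_bnd (f : Fin 4 → Fin 3) : IsPartition (bnd f) := by
  constructor
  · intro i j hij
    rw [Finset.disjoint_left]
    intro e he1 he2
    simp only [bnd, Finset.mem_filter] at he1 he2
    exact hij (he1.2 ▸ he2.2)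
  · intro e; exact ⟨f e, by simp [bnd]⟩

lemma partition_eq_bnd {A : Fin 3 → Finset (Fin 4)} (h : IsPartition A) :
    ∃ f : Fin 4 → Fin 3, A = bnd f := by
  refine ⟨fun e => (h.2 e).choose, ?_⟩
  funext i
  ext e
  simp only [bnd, Finset.mem_filter, Finset.mem_univ, true_and]
  constructor
  · intro he
    by_contra hne
    exact (Finset.disjoint_left.1 (h.1 _ _ hne)) (h.2 e).choose_spec he
  · intro he; exact he ▸ (h.2 e).choose_spec

lemma inf3_le {g : Fin 3 → ℝ} (j : Fin 3) : (⨅ k, g k) ≤ g j :=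
  ciInf_le (Set.Finite.bddBelow (Set.finite_range g)) j

lemma inf3_eq (g : Fin 3 → ℝ) : (⨅ k, g k) = min (g 0) (min (g 1) (g 2)) := by
  apply le_antisymm
  · exact le_min (inf3_le 0) (le_min (inf3_le 1) (inf3_le 2))
  · apply le_ciInf
    intro j
    fin_cases j
    · exact min_le_left _ _
    · exact (min_le_right _ _).trans (min_le_left _ _)
    · exact (min_le_right _ _).trans (min_le_right _ _)

lemma fin3_cases (k : Fin 3) : k = 0 ∨ k = 1 ∨ k = 2 := by
  fin_cases k <;> simp

lemma ub_b {i : Fin 3} {t : ℝ}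
    (ht : t ∈ {t : ℝ | ∃ B : Fin 3 → Finset (Fin 4), IsPartition B ∧
      t = ⨅ j, (b i / b j) * bval (v i) (B j)}) : t ≤ WbR i := by
  obtain ⟨B, hB, rfl⟩ := ht
  obtain ⟨f, rfl⟩ := partition_eq_bnd hB
  obtain ⟨j, hz⟩ := (UBZ f i).1
  refine le_trans (inf3_le j) ?_
  rw [hbval]
  have hzr := (@Int.cast_le ℝ _ _ _).mpr hz
  push_cast at hzr
  rcases fin3_cases i with rfl | rfl | rfl <;> rcases fin3_cases j with rfl | rfl | rfl <;>
    norm_num [Matrix.cons_val_two, nb, nW, dW, b, WbR] at hzr ⊢ <;> linarith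

lemma ub_b' {i : Fin 3} {t : ℝ}
    (ht : t ∈ {t : ℝ | ∃ B : Fin 3 → Finset (Fin 4), IsPartition B ∧
      t = ⨅ j, (b' i / b' j) * bval (v i) (B j)}) : t ≤ Wb'R i := by
  obtain ⟨B, hB, rfl⟩ := ht
  obtain ⟨f, rfl⟩ := partition_eq_bnd hB
  obtain ⟨j, hz⟩ := (UBZ f i).2
  refine le_trans (inf3_le j) ?_
  rw [hbval]
  have hzr := (@Int.cast_le ℝ _ _ _).mpr hz
  push_cast at hzr
  rcases fin3_cases i with rfl | rfl | rfl <;> rcases fin3_cases j with rfl | rfl | rfl <;>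
    norm_num [Matrix.cons_val_two, nb', nW', dW', b', Wb'R] at hzr ⊢ <;> linarith

lemma wmms_b_eq (i : Fin 3) : wmms b i = WbR i := by
  apply le_antisymm
  · apply Real.sSup_le (fun t ht => ub_b ht)
    rcases fin3_cases i with rfl | rfl | rfl <;> norm_num [Matrix.cons_val_two, WbR]
  · apply le_csSup ⟨WbR i, fun t ht => ub_b ht⟩
    rcases fin3_cases i with rfl | rfl | rfl
    · refine ⟨bnd ![2,0,1,0], isPartition_bnd _, ?_⟩
      rw [inf3_eq]
      simp only [hbval]
      have h0 : QZ 0 ![2,0,1,0] 0 = 46 := by decide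
      have h1 : QZ 0 ![2,0,1,0] 1 = 45 := by decide
      have h2 : QZ 0 ![2,0,1,0] 2 = 12 := by decide
      rw [h0, h1, h2]
      norm_num [Matrix.cons_val_two, b, WbR, min_def]
    · refine ⟨bnd ![0,2,1,0], isPartition_bnd _, ?_⟩
      rw [inf3_eq]
      simp only [hbval]
      have h0 : QZ 1 ![0,2,1,0] 0 = 46 := by decide
      have h1 : QZ 1 ![0,2,1,0] 1 = 45 := by decide
      have h2 : QZ 1 ![0,2,1,0] 2 = 12 := by decide
      rw [h0, h1, h2]
      norm_num [Matrix.cons_val_two, b, WbR, min_def]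
    · refine ⟨bnd ![0,0,1,2], isPartition_bnd _, ?_⟩
      rw [inf3_eq]
      simp only [hbval]
      have h0 : QZ 2 ![0,0,1,2] 0 = 19 := by decide
      have h1 : QZ 2 ![0,0,1,2] 1 = 11 := by decide
      have h2 : QZ 2 ![0,0,1,2] 2 = 11 := by decide
      rw [h0, h1, h2]
      norm_num [Matrix.cons_val_two, b, WbR, min_def]

lemma wmms_b'_eq (i : Fin 3) : wmms b' i = Wb'R i := by
  apply le_antisymm
  · apply Real.sSup_le (fun t ht => ub_b' ht)
    rcases fin3_cases i with rfl | rfl | rfl <;> norm_num [Matrix.cons_val_two, Wb'R]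
  · apply le_csSup ⟨Wb'R i, fun t ht => ub_b' ht⟩
    rcases fin3_cases i with rfl | rfl | rfl
    · refine ⟨bnd ![2,1,0,1], isPartition_bnd _, ?_⟩
      rw [inf3_eq]
      simp only [hbval]
      have h0 : QZ 0 ![2,1,0,1] 0 = 45 := by decide
      have h1 : QZ 0 ![2,1,0,1] 1 = 46 := by decide
      have h2 : QZ 0 ![2,1,0,1] 2 = 12 := by decide
      rw [h0, h1, h2]
      norm_num [Matrix.cons_val_two, b', Wb'R, min_def]
    · refine ⟨bnd ![1,2,0,1], isPartition_bnd _, ?_⟩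
      rw [inf3_eq]
      simp only [hbval]
      have h0 : QZ 1 ![1,2,0,1] 0 = 45 := by decide
      have h1 : QZ 1 ![1,2,0,1] 1 = 46 := by decide
      have h2 : QZ 1 ![1,2,0,1] 2 = 12 := by decide
      rw [h0, h1, h2]
      norm_num [Matrix.cons_val_two, b', Wb'R, min_def]
    · refine ⟨bnd ![1,1,0,2], isPartition_bnd _, ?_⟩
      rw [inf3_eq]
      simp only [hbval]
      have h0 : QZ 2 ![1,1,0,2] 0 = 11 := by decide
      have h1 : QZ 2 ![1,1,0,2] 1 = 19 := by decide
      have h2 : QZ 2 ![1,1,0,2] 2 = 11 := by decide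
      rw [h0, h1, h2]
      norm_num [Matrix.cons_val_two, b', Wb'R, min_def]

lemma uniq_b {A : Fin 3 → Finset (Fin 4)} (h : WmmsAcc b A) :
    A 2 = {0} ∧ bval (v 2) (A 2) = 10 := by
  obtain ⟨hpart, hacc⟩ := h
  obtain ⟨f, rfl⟩ := partition_eq_bnd hpart
  have key : ∀ i, WbR i ≤ ((QZ i f i : ℤ) : ℝ) := by
    intro i
    have := hacc i
    rwa [wmms_b_eq, hbval] at this
  have k0 : (46 : ℤ) ≤ QZ 0 f 0 := by
    have := key 0; rw [show WbR 0 = 46 by norm_num [WbR]] at this; exact_mod_cast this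
  have k1 : (45 : ℤ) ≤ QZ 1 f 1 := by
    have := key 1; rw [show WbR 1 = 45 by norm_num [WbR]] at this; exact_mod_cast this
  have k2 : (11 : ℤ) ≤ 5 * QZ 2 f 2 := by
    have h2 := key 2
    rw [show WbR 2 = 11/5 by norm_num [Matrix.cons_val_two, WbR]] at h2
    have : (11 : ℝ) ≤ ((5 * QZ 2 f 2 : ℤ) : ℝ) := by push_cast; linarith
    exact_mod_cast this
  obtain ⟨he, hq⟩ := (UNIQZ f).1 k0 k1 k2
  refine ⟨he, ?_⟩
  rw [hbval, hq]; norm_num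

lemma uniq_b' {A : Fin 3 → Finset (Fin 4)} (h : WmmsAcc b' A) :
    A 2 = {1} ∧ bval (v 2) (A 2) = 9 := by
  obtain ⟨hpart, hacc⟩ := h
  obtain ⟨f, rfl⟩ := partition_eq_bnd hpart
  have key : ∀ i, Wb'R i ≤ ((QZ i f i : ℤ) : ℝ) := by
    intro i
    have := hacc i
    rwa [wmms_b'_eq, hbval] at this
  have k0 : (2024 : ℤ) ≤ 45 * QZ 0 f 0 := by
    have h0 := key 0
    rw [show Wb'R 0 = 2024/45 by norm_num [Wb'R]] at h0
    have : (2024 : ℝ) ≤ ((45 * QZ 0 f 0 : ℤ) : ℝ) := by push_cast; linarith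
    exact_mod_cast this
  have k1 : (46 : ℤ) ≤ QZ 1 f 1 := by
    have := key 1; rw [show Wb'R 1 = 46 by norm_num [Wb'R]] at this; exact_mod_cast this
  have k2 : (11 : ℤ) ≤ 4 * QZ 2 f 2 := by
    have h2 := key 2
    rw [show Wb'R 2 = 11/4 by norm_num [Matrix.cons_val_two, Wb'R]] at h2
    have : (11 : ℝ) ≤ ((4 * QZ 2 f 2 : ℤ) : ℝ) := by push_cast; linarith
    exact_mod_cast this
  obtain ⟨he, hq⟩ := (UNIQZ f).2 k0 k1 k2
  refine ⟨he, ?_⟩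
  rw [hbval, hq]; norm_num

/-- WMMS suffers from the inversion paradox: b' 3-improves b,
yet every WMMS-acceptable allocation for b gives agent 3 the bundle {e₁} of
value 10, while every WMMS-acceptable allocation for b' gives agent 3 the
bundle {e₂} of value 9. -/
theorem stmt_11 :
    -- b' 3-improves b
    (b 2 < b' 2 ∧ ∀ j, j ≠ 2 → b' j ≤ b j) ∧
    -- acceptance set for b is nonempty and every acceptable allocation gives agent 3 {e₁}, value 10
    (∃ A, WmmsAcc b A) ∧
    (∀ A, WmmsAcc b A → A 2 = {0} ∧ bval (v 2) (A 2) = 10) ∧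
    -- acceptance set for b' is nonempty and every acceptable allocation gives agent 3 {e₂}, value 9
    (∃ A, WmmsAcc b' A) ∧
    (∀ A, WmmsAcc b' A → A 2 = {1} ∧ bval (v 2) (A 2) = 9) ∧
    -- hence the inversion: agent 3 gets strictly more under b than under b'
    (∀ A A', WmmsAcc b A → WmmsAcc b' A' → bval (v 2) (A' 2) < bval (v 2) (A 2)) := by
  refine ⟨⟨by norm_num [Matrix.cons_val_two, b, b'], ?_⟩, ?_, fun A h => uniq_b h, ?_, fun A h => uniq_b' h, ?_⟩
  · intro j hj
    rcases fin3_cases j with rfl | rfl | rfl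
    · norm_num [b, b']
    · norm_num [b, b']
    · exact absurd rfl hj
  · refine ⟨bnd ![2,0,1,0], isPartition_bnd _, ?_⟩
    intro i
    rw [wmms_b_eq, hbval]
    rcases fin3_cases i with rfl | rfl | rfl
    · have h : QZ 0 ![2,0,1,0] 0 = 46 := by decide
      rw [h]; norm_num [WbR]
    · have h : QZ 1 ![2,0,1,0] 1 = 45 := by decide
      rw [h]; norm_num [WbR]
    · have h : QZ 2 ![2,0,1,0] 2 = 10 := by decide
      rw [h]; norm_num [Matrix.cons_val_two, WbR]
  · refine ⟨bnd ![1,2,0,1], isPartition_bnd _, ?_⟩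
    intro i
    rw [wmms_b'_eq, hbval]
    rcases fin3_cases i with rfl | rfl | rfl
    · have h : QZ 0 ![1,2,0,1] 0 = 45 := by decide
      rw [h]; norm_num [Wb'R]
    · have h : QZ 1 ![1,2,0,1] 1 = 46 := by decide
      rw [h]; norm_num [Wb'R]
    · have h : QZ 2 ![1,2,0,1] 2 = 9 := by decide
      rw [h]; norm_num [Matrix.cons_val_two, Wb'R]
  · intro A A' hA hA'
    rw [(uniq_b hA).2, (uniq_b' hA').2]
    norm_num

end Stmt11
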